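/- arXiv:2601.11490 — 2 statements merged into one kernel-verified Lean document; each statement's English description precedes it below -/
import Mathlib

section
/- Let H ≥ 2 be an integer and let ε, δ, c be real numbers with 0 < ε < 1/3, 0 < δ < ε/(H−1), and (H−1)δ + 3 < c. Let X = [0, 1−ε] ∪ [2, 3−ε] ⊆ ℝ, let n ≥ 1 be an integer, and for each j = 1,…,n let Y_j be a nonempty Lebesgue-measurable subset of [1+ε, 2−2ε]. Define A_j = [0, δ] ∪ (c + (X ∪ Y_j)). Then for all integers h with 1 ≤ h ≤ H and all j, k ∈ {1,…,n}, μ(hA_j) − μ(hA_k) = μ([0, (h−1)δ] + Y_j) − μ([0, (h−1)δ] + Y_k). -/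
open MeasureTheory Pointwise

def sumset (h : ℕ) (A : Set ℝ) : Set ℝ :=
  {x | ∃ f : Fin h → ℝ, (∀ i, f i ∈ A) ∧ ∑ i, f i = x}

lemma sumset_mono {h : ℕ} {S T : Set ℝ} (hST : S ⊆ T) : sumset h S ⊆ sumset h T := by
  rintro x ⟨f, hf, rfl⟩
  exact ⟨f, fun i => hST (hf i), rfl⟩

lemma sumset_zero (S : Set ℝ) : sumset 0 S = {0} := by
  ext x
  constructor
  · rintro ⟨f, -, rfl⟩
    simp
  · rintro rfl
    exact ⟨fun i => i.elim0, fun i => i.elim0, by simp⟩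

lemma sumset_one (S : Set ℝ) : sumset 1 S = S := by
  ext x
  constructor
  · rintro ⟨f, hf, rfl⟩
    simpa using hf 0
  · intro hx
    exact ⟨fun _ => x, fun _ => hx, by simp⟩

lemma add_mem_sumset {a b : ℕ} {S : Set ℝ} {x y : ℝ}
    (hx : x ∈ sumset a S) (hy : y ∈ sumset b S) : x + y ∈ sumset (a + b) S := by
  obtain ⟨f, hf, rfl⟩ := hx
  obtain ⟨g, hg, rfl⟩ := hy
  refine ⟨Fin.append f g, ?_, ?_⟩
  · intro i
    refine Fin.addCases (fun i => ?_) (fun i => ?_) i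
    · rw [Fin.append_left]; exact hf i
    · rw [Fin.append_right]; exact hg i
  · rw [Fin.sum_univ_add]
    simp [Fin.append_left, Fin.append_right]

lemma pair_mem_sumset {S : Set ℝ} {a b : ℝ} (ha : a ∈ S) (hb : b ∈ S) :
    a + b ∈ sumset 2 S :=
  ⟨![a, b], fun i => by fin_cases i <;> simpa, by simp [Fin.sum_univ_two]⟩

lemma sumset_Icc (h : ℕ) {a b : ℝ} (hab : a ≤ b) :
    sumset h (Set.Icc a b) = Set.Icc ((h : ℝ) * a) ((h : ℝ) * b) := by
  ext x
  constructor
  · rintro ⟨f, hf, rfl⟩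
    constructor
    · calc (h : ℝ) * a = ∑ _i : Fin h, a := by simp [mul_comm]
        _ ≤ ∑ i, f i := Finset.sum_le_sum fun i _ => (hf i).1
    · calc ∑ i, f i ≤ ∑ _i : Fin h, b := Finset.sum_le_sum fun i _ => (hf i).2
        _ = (h : ℝ) * b := by simp [mul_comm]
  · rintro ⟨h1, h2⟩
    rcases Nat.eq_zero_or_pos h with rfl | hh
    · simp only [Nat.cast_zero, zero_mul] at h1 h2
      refine ⟨fun i => i.elim0, fun i => i.elim0, by simp; linarith⟩
    · have hh' : (0 : ℝ) < h := by exact_mod_cast hh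
      refine ⟨fun _ => x / h, fun i => ⟨?_, ?_⟩, ?_⟩
      · rw [le_div_iff₀ hh']; linarith
      · rw [div_le_iff₀ hh']; linarith
      · simp [Finset.sum_const, mul_comm]
        field_simp

lemma sum_mem_sumset {h : ℕ} (f : Fin h → ℝ) (T : Finset (Fin h)) {S : Set ℝ}
    (hf : ∀ i ∈ T, f i ∈ S) : (∑ i ∈ T, f i) ∈ sumset T.card S := by
  refine ⟨fun j => f (T.equivFin.symm j), fun j => hf _ (T.equivFin.symm j).2, ?_⟩
  rw [← Finset.sum_coe_sort T f]
  exact Fintype.sum_equiv T.equivFin.symm _ _ (fun j => rfl)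

lemma sumset_union_subset (h : ℕ) (P Q : Set ℝ) :
    sumset h (P ∪ Q) ⊆ ⋃ r ∈ Finset.range (h + 1), (sumset (h - r) P + sumset r Q) := by
  classical
  rintro x ⟨f, hf, rfl⟩
  set T : Finset (Fin h) := Finset.univ.filter (fun i => f i ∈ Q) with hT
  have hr : T.card ≤ h := le_trans (Finset.card_filter_le _ _) (by simp)
  refine Set.mem_iUnion₂.2 ⟨T.card, Finset.mem_range.2 (Nat.lt_succ_of_le hr), ?_⟩
  have hcompl : Tᶜ.card = h - T.card := by
    rw [Finset.card_compl]; simp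
  have h1 : (∑ i ∈ Tᶜ, f i) ∈ sumset (h - T.card) P := by
    rw [← hcompl]
    refine sum_mem_sumset f Tᶜ fun i hi => ?_
    have : f i ∉ Q := by
      simpa [hT] using (Finset.mem_compl.1 hi)
    rcases hf i with h | h
    · exact h
    · exact absurd h this
  have h2 : (∑ i ∈ T, f i) ∈ sumset T.card Q :=
    sum_mem_sumset f T fun i hi => by simpa [hT] using hi
  exact ⟨_, h1, _, h2, Finset.sum_compl_add_sum T f⟩

lemma sumset_image_const_add (r : ℕ) (c : ℝ) (S : Set ℝ) :
    sumset r ((c + ·) '' S) = (fun x => (r : ℝ) * c + x) '' sumset r S := by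
  ext x
  constructor
  · rintro ⟨f, hf, rfl⟩
    choose g hg hfg using hf
    refine ⟨∑ i, g i, ⟨g, hg, rfl⟩, ?_⟩
    calc (r : ℝ) * c + ∑ i, g i = ∑ i : Fin r, (c + g i) := by
          rw [Finset.sum_add_distrib]
          simp [Finset.sum_const, mul_comm]
      _ = ∑ i, f i := Finset.sum_congr rfl fun i _ => (hfg i)
  · rintro ⟨v, ⟨g, hg, rfl⟩, rfl⟩
    refine ⟨fun i => c + g i, fun i => ⟨g i, hg i, rfl⟩, ?_⟩
    rw [Finset.sum_add_distrib]
    simp [Finset.sum_const, mul_comm]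

lemma volume_image_const_add (c : ℝ) (T : Set ℝ) : volume ((c + ·) '' T) = volume T := by
  have h : (c + ·) '' T = (fun x => -c + x) ⁻¹' T := by
    ext x
    constructor
    · rintro ⟨t, ht, rfl⟩
      simpa using ht
    · intro hx
      exact ⟨-c + x, hx, by ring⟩
  rw [h, measure_preimage_add]

lemma mem_two_sumset {ε : ℝ} (hε0 : 0 < ε) (hε : ε < 1 / 3) {Y : Set ℝ} {y₀ : ℝ}
    (hy₀Y : y₀ ∈ Y) (hy₀ : y₀ ∈ Set.Icc (1 + ε) (2 - 2 * ε)) {w : ℝ}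
    (hw : w ∈ Set.Icc 0 (6 - 2 * ε)) :
    w ∈ sumset 2 ((Set.Icc 0 (1 - ε) ∪ Set.Icc 2 (3 - ε)) ∪ Y) := by
  obtain ⟨hw0, hw6⟩ := hw
  obtain ⟨hy1, hy2⟩ := hy₀
  set S : Set ℝ := (Set.Icc 0 (1 - ε) ∪ Set.Icc 2 (3 - ε)) ∪ Y with hS
  have mem1 : ∀ z : ℝ, 0 ≤ z → z ≤ 1 - ε → z ∈ S := fun z h1 h2 =>
    Or.inl (Or.inl ⟨h1, h2⟩)
  have mem2 : ∀ z : ℝ, 2 ≤ z → z ≤ 3 - ε → z ∈ S := fun z h1 h2 =>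
    Or.inl (Or.inr ⟨h1, h2⟩)
  have memy : y₀ ∈ S := Or.inr hy₀Y
  rcases le_or_gt w (2 - 2 * ε) with h1 | h1
  · have : w / 2 + w / 2 ∈ sumset 2 S :=
      pair_mem_sumset (mem1 _ (by linarith) (by linarith)) (mem1 _ (by linarith) (by linarith))
    simpa [add_halves] using this
  rcases lt_or_ge w 2 with h2 | h2
  · have : y₀ + (w - y₀) ∈ sumset 2 S :=
      pair_mem_sumset memy (mem1 _ (by linarith) (by linarith))
    simpa using this
  rcases le_or_gt w (3 - ε) with h3 | h3
  · have : (w - 2) + 2 ∈ sumset 2 S :=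
      pair_mem_sumset (mem1 _ (by linarith) (by linarith)) (mem2 _ le_rfl (by linarith))
    simpa using this
  rcases le_or_gt w (4 - 2 * ε) with h4 | h4
  · have : (w - (3 - ε)) + (3 - ε) ∈ sumset 2 S :=
      pair_mem_sumset (mem1 _ (by linarith) (by linarith)) (mem2 _ (by linarith) le_rfl)
    simpa using this
  rcases lt_or_ge w 4 with h5 | h5
  · have : y₀ + (w - y₀) ∈ sumset 2 S :=
      pair_mem_sumset memy (mem2 _ (by linarith) (by linarith))
    simpa using this
  · have : w / 2 + w / 2 ∈ sumset 2 S :=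
      pair_mem_sumset (mem2 _ (by linarith) (by linarith)) (mem2 _ (by linarith) (by linarith))
    simpa [add_halves] using this

lemma Icc_subset_sumset_XY {ε : ℝ} (hε0 : 0 < ε) (hε : ε < 1 / 3) {Y : Set ℝ} {y₀ : ℝ}
    (hy₀Y : y₀ ∈ Y) (hy₀ : y₀ ∈ Set.Icc (1 + ε) (2 - 2 * ε)) {r : ℕ} (hr : 2 ≤ r) :
    Set.Icc (0 : ℝ) ((r : ℝ) * (3 - ε)) ⊆
      sumset r ((Set.Icc 0 (1 - ε) ∪ Set.Icc 2 (3 - ε)) ∪ Y) := by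
  obtain ⟨m, rfl⟩ := Nat.exists_eq_add_of_le hr
  set S : Set ℝ := (Set.Icc 0 (1 - ε) ∪ Set.Icc 2 (3 - ε)) ∪ Y with hS
  rintro v ⟨hv0, hvtop⟩
  have hvtop' : v ≤ 2 * m + (6 - 2 * ε) + m * (1 - ε) := by
    have : ((2 + m : ℕ) : ℝ) = 2 + (m : ℝ) := by push_cast; ring
    rw [this] at hvtop; nlinarith
  set t : ℕ := min m ⌊v / 2⌋₊ with ht
  have htm : t ≤ m := min_le_left _ _
  have htm' : (t : ℝ) ≤ m := by exact_mod_cast htm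
  have h2t : 2 * (t : ℝ) ≤ v := by
    have h1 : ((⌊v / 2⌋₊ : ℕ) : ℝ) ≤ v / 2 := Nat.floor_le (by positivity)
    have h2 : (t : ℝ) ≤ (⌊v / 2⌋₊ : ℕ) := by exact_mod_cast min_le_right m _
    linarith
  have hup : v ≤ 2 * (t : ℝ) + (6 - 2 * ε) + m * (1 - ε) := by
    rcases le_total m ⌊v / 2⌋₊ with hcle | hcle
    · have : t = m := min_eq_left hcle
      rw [this]; linarith
    · have htf : t = ⌊v / 2⌋₊ := min_eq_right hcle
      have : v / 2 < ⌊v / 2⌋₊ + 1 := Nat.lt_floor_add_one _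
      have hm0 : (0 : ℝ) ≤ m * (1 - ε) := by
        have : (0:ℝ) ≤ (m:ℝ) := Nat.cast_nonneg m
        nlinarith
      rw [htf] at h2t ⊢
      nlinarith
  set w : ℝ := min (v - 2 * t) (6 - 2 * ε) with hwdef
  set z : ℝ := v - 2 * t - w with hzdef
  have hw : w ∈ Set.Icc (0 : ℝ) (6 - 2 * ε) :=
    ⟨le_min (by linarith) (by linarith), min_le_right _ _⟩
  have hz0 : 0 ≤ z := by
    have := min_le_left (v - 2 * t) (6 - 2 * ε); simp only [hzdef]; linarith [min_le_left (v - 2 * (t:ℝ)) (6 - 2 * ε)]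
  have hm1 : (0 : ℝ) ≤ (m : ℝ) * (1 - ε) := mul_nonneg (Nat.cast_nonneg m) (by linarith)
  have ht1 : (0 : ℝ) ≤ (t : ℝ) * (1 - ε) := mul_nonneg (Nat.cast_nonneg t) (by linarith)
  have hzm : z ≤ m * (1 - ε) := by
    rcases min_cases (v - 2 * (t : ℝ)) (6 - 2 * ε) with ⟨he, hle⟩ | ⟨he, hle⟩ <;>
      simp only [hzdef, hwdef, he] <;> linarith
  -- 2t + z ∈ sumset m S
  have hcast : ((m - t : ℕ) : ℝ) = (m : ℝ) - t := by
    rw [Nat.cast_sub htm]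
  have hu1 : (2 * (t : ℝ) + min z ((t : ℝ) * (1 - ε))) ∈ sumset t (Set.Icc 2 (3 - ε)) := by
    rw [sumset_Icc t (by linarith : (2:ℝ) ≤ 3 - ε)]
    constructor
    · have : 0 ≤ min z ((t : ℝ) * (1 - ε)) := le_min hz0 ht1
      linarith [this]
    · have : min z ((t:ℝ) * (1 - ε)) ≤ (t:ℝ) * (1 - ε) := min_le_right _ _
      nlinarith
  have hu2 : (z - min z ((t : ℝ) * (1 - ε))) ∈ sumset (m - t) (Set.Icc 0 (1 - ε)) := by
    rw [sumset_Icc (m - t) (by linarith : (0:ℝ) ≤ 1 - ε), hcast]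
    constructor
    · simp [sub_nonneg, min_le_left]
    · rcases min_cases z ((t : ℝ) * (1 - ε)) with ⟨he, -⟩ | ⟨he, -⟩ <;> rw [he] <;> nlinarith
  have hsub1 : Set.Icc (2:ℝ) (3 - ε) ⊆ S := fun x hx => Or.inl (Or.inr hx)
  have hsub2 : Set.Icc (0:ℝ) (1 - ε) ⊆ S := fun x hx => Or.inl (Or.inl hx)
  have hmm : (2 * (t : ℝ) + z) ∈ sumset m S := by
    have := add_mem_sumset (sumset_mono hsub1 hu1) (sumset_mono hsub2 hu2)
    rw [Nat.add_sub_cancel' htm] at this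
    convert this using 1
    ring
  have h2w : w ∈ sumset 2 S := mem_two_sumset hε0 hε hy₀Y hy₀ hw
  have := add_mem_sumset h2w hmm
  convert this using 1
  simp only [hzdef]
  ring

lemma sumset_A_eq (ε δ c : ℝ) (hε0 : 0 < ε) (hε : ε < 1 / 3) (hδ0 : 0 < δ)
    (Y : Set ℝ) (y₀ : ℝ) (hy₀Y : y₀ ∈ Y) (hYsub : Y ⊆ Set.Icc (1 + ε) (2 - 2 * ε))
    (h : ℕ) (h1 : 1 ≤ h) :
    sumset h (Set.Icc 0 δ ∪ ((c + ·) '' ((Set.Icc 0 (1 - ε) ∪ Set.Icc 2 (3 - ε)) ∪ Y)))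
      = ((c + ·) '' (Set.Icc 0 (((h : ℝ) - 1) * δ) + Y)) ∪
        (Set.Icc 0 ((h : ℝ) * δ)
          ∪ ((c + ·) '' (Set.Icc 0 (((h : ℝ) - 1) * δ)
              + (Set.Icc 0 (1 - ε) ∪ Set.Icc 2 (3 - ε))))
          ∪ ⋃ r ∈ Finset.Icc 2 h,
              Set.Icc ((r : ℝ) * c) ((r : ℝ) * c + ((h - r : ℕ) : ℝ) * δ + (r : ℝ) * (3 - ε))) := by
  set X' : Set ℝ := Set.Icc 0 (1 - ε) ∪ Set.Icc 2 (3 - ε) with hX'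
  have hy₀ : y₀ ∈ Set.Icc (1 + ε) (2 - 2 * ε) := hYsub hy₀Y
  have hXY3 : X' ∪ Y ⊆ Set.Icc (0 : ℝ) (3 - ε) := by
    rintro x ((⟨hx1, hx2⟩ | ⟨hx1, hx2⟩) | hx)
    · exact ⟨hx1, by linarith⟩
    · exact ⟨by linarith, hx2⟩
    · obtain ⟨hx1, hx2⟩ := hYsub hx
      exact ⟨by linarith, by linarith⟩
  have hcast1 : ((h - 1 : ℕ) : ℝ) = (h : ℝ) - 1 := by
    rw [Nat.cast_sub h1]; simp
  apply subset_antisymm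
  · intro x hx
    obtain ⟨r, hrmem, hxr⟩ := Set.mem_iUnion₂.1 (sumset_union_subset h _ _ hx)
    have hrh : r ≤ h := Nat.lt_succ_iff.1 (Finset.mem_range.1 hrmem)
    obtain ⟨u, hu, q, hq, rfl⟩ := hxr
    rw [sumset_Icc _ (le_of_lt hδ0), mul_zero] at hu
    rw [sumset_image_const_add] at hq
    obtain ⟨v, hv, rfl⟩ := hq
    match r, hrh with
    | 0, _ =>
      rw [sumset_zero] at hv
      rw [Set.mem_singleton_iff] at hv
      subst hv
      refine Or.inr (Or.inl (Or.inl ?_))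
      simp only [Nat.sub_zero] at hu
      simpa using hu
    | 1, _ =>
      rw [sumset_one] at hv
      rw [hcast1] at hu
      rcases hv with hv | hv
      · refine Or.inr (Or.inl (Or.inr ?_))
        exact ⟨u + v, Set.add_mem_add hu hv, by push_cast; ring⟩
      · refine Or.inl ?_
        exact ⟨u + v, Set.add_mem_add hu hv, by push_cast; ring⟩
    | (r + 2), hrh =>
      have hv' : v ∈ Set.Icc (0 : ℝ) (((r + 2 : ℕ) : ℝ) * (3 - ε)) := by
        have := sumset_mono hXY3 hv
        rw [sumset_Icc _ (by linarith : (0:ℝ) ≤ 3 - ε), mul_zero] at this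
        exact this
      refine Or.inr (Or.inr ?_)
      refine Set.mem_biUnion (Finset.mem_Icc.2 ⟨by omega, hrh⟩) ?_
      obtain ⟨hu1, hu2⟩ := hu
      obtain ⟨hv1, hv2⟩ := hv'
      show u + (((r + 2 : ℕ) : ℝ) * c + v) ∈ Set.Icc _ _
      exact ⟨by linarith, by linarith⟩
  · rintro x (hx | ((hx | hx) | hx))
    · -- r = 1, Y part
      obtain ⟨s, hs, rfl⟩ := hx
      obtain ⟨u, hu, yv, hyv, rfl⟩ := hs
      have hu' : u ∈ sumset (h - 1) (Set.Icc 0 δ) := by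
        rw [sumset_Icc _ (le_of_lt hδ0), mul_zero, hcast1]
        exact hu
      have hyv' : c + yv ∈ sumset 1 ((c + ·) '' (X' ∪ Y)) := by
        rw [sumset_one]
        exact ⟨yv, Or.inr hyv, rfl⟩
      have := add_mem_sumset (sumset_mono Set.subset_union_left hu')
        (sumset_mono Set.subset_union_right hyv')
      rw [Nat.sub_add_cancel h1] at this
      convert this using 1
      ring
    · -- r = 0
      have : x ∈ sumset h (Set.Icc 0 δ) := by
        rw [sumset_Icc _ (le_of_lt hδ0), mul_zero]
        exact hx
      exact sumset_mono Set.subset_union_left this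
    · -- r = 1, X part
      obtain ⟨s, hs, rfl⟩ := hx
      obtain ⟨u, hu, xv, hxv, rfl⟩ := hs
      have hu' : u ∈ sumset (h - 1) (Set.Icc 0 δ) := by
        rw [sumset_Icc _ (le_of_lt hδ0), mul_zero, hcast1]
        exact hu
      have hxv' : c + xv ∈ sumset 1 ((c + ·) '' (X' ∪ Y)) := by
        rw [sumset_one]
        exact ⟨xv, Or.inl hxv, rfl⟩
      have := add_mem_sumset (sumset_mono Set.subset_union_left hu')
        (sumset_mono Set.subset_union_right hxv')
      rw [Nat.sub_add_cancel h1] at this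
      convert this using 1
      ring
    · -- r ≥ 2
      obtain ⟨r, hrmem, hxmem⟩ := Set.mem_iUnion₂.1 hx
      obtain ⟨hr2, hrh⟩ := Finset.mem_Icc.1 hrmem
      obtain ⟨hx1, hx2⟩ := hxmem
      have hhr0 : (0 : ℝ) ≤ ((h - r : ℕ) : ℝ) * δ := by positivity
      set u : ℝ := min (x - (r : ℝ) * c) (((h - r : ℕ) : ℝ) * δ) with hudef
      have hu : u ∈ Set.Icc (0 : ℝ) (((h - r : ℕ) : ℝ) * δ) :=
        ⟨le_min (by linarith) hhr0, min_le_right _ _⟩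
      set v : ℝ := x - (r : ℝ) * c - u with hvdef
      have hr3 : (0 : ℝ) ≤ (r : ℝ) * (3 - ε) :=
        mul_nonneg (Nat.cast_nonneg r) (by linarith)
      have hv : v ∈ Set.Icc (0 : ℝ) ((r : ℝ) * (3 - ε)) := by
        constructor
        · simp only [hvdef, hudef]
          have := min_le_left (x - (r : ℝ) * c) (((h - r : ℕ) : ℝ) * δ)
          linarith
        · rcases min_cases (x - (r : ℝ) * c) (((h - r : ℕ) : ℝ) * δ) with ⟨he, -⟩ | ⟨he, -⟩ <;>
            simp only [hvdef, hudef, he] <;> linarith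
      have hu' : u ∈ sumset (h - r) (Set.Icc 0 δ) := by
        rw [sumset_Icc _ (le_of_lt hδ0), mul_zero]
        exact hu
      have hv' : (r : ℝ) * c + v ∈ sumset r ((c + ·) '' (X' ∪ Y)) := by
        rw [sumset_image_const_add]
        exact ⟨v, Icc_subset_sumset_XY hε0 hε hy₀Y hy₀ hr2 hv, rfl⟩
      have := add_mem_sumset (sumset_mono Set.subset_union_left hu')
        (sumset_mono Set.subset_union_right hv')
      rw [Nat.sub_add_cancel hrh] at this
      convert this using 1
      simp only [hvdef]
      ring

/-- Let `H ≥ 2` and let `ε, δ, c` be reals with `0 < ε < 1/3`, `0 < δ < ε/(H−1)`, and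
`(H−1)δ + 3 < c`.  Let `X = [0, 1−ε] ∪ [2, 3−ε]`, and for each `j = 1,…,n` let `Y j` be
a nonempty Lebesgue-measurable subset of `[1+ε, 2−2ε]`.  Define
`A j = [0, δ] ∪ (c + (X ∪ Y j))`.  Then for all `1 ≤ h ≤ H` and all `j, k ∈ {1,…,n}`,
`μ(h(A j)) − μ(h(A k)) = μ([0, (h−1)δ] + Y j) − μ([0, (h−1)δ] + Y k)`. -/
theorem measure_difference_formula (H : ℕ) (hH : 2 ≤ H)
    (ε δ c : ℝ) (hε0 : 0 < ε) (hε : ε < 1 / 3)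
    (hδ0 : 0 < δ) (hδ : δ < ε / ((H : ℝ) - 1)) (hc : ((H : ℝ) - 1) * δ + 3 < c)
    (X : Set ℝ) (hX : X = Set.Icc 0 (1 - ε) ∪ Set.Icc 2 (3 - ε))
    (n : ℕ) (hn : 1 ≤ n) (Y : ℕ → Set ℝ)
    (hYsub : ∀ j, 1 ≤ j → j ≤ n → Y j ⊆ Set.Icc (1 + ε) (2 - 2 * ε))
    (hYne : ∀ j, 1 ≤ j → j ≤ n → (Y j).Nonempty)
    (hYmeas : ∀ j, 1 ≤ j → j ≤ n → MeasurableSet (Y j))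
    (A : ℕ → Set ℝ)
    (hA : ∀ j, 1 ≤ j → j ≤ n → A j = Set.Icc 0 δ ∪ ((c + ·) '' (X ∪ Y j))) :
    ∀ h, 1 ≤ h → h ≤ H → ∀ j, 1 ≤ j → j ≤ n → ∀ k, 1 ≤ k → k ≤ n →
      (volume (sumset h (A j))).toReal - (volume (sumset h (A k))).toReal
        = (volume (Set.Icc (0 : ℝ) (((h : ℝ) - 1) * δ) + Y j)).toReal
          - (volume (Set.Icc (0 : ℝ) (((h : ℝ) - 1) * δ) + Y k)).toReal := by
  intro h h1 hhH j hj1 hjn k hk1 hkn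
  have hH1 : (1 : ℝ) ≤ (H : ℝ) - 1 := by
    have : (2 : ℝ) ≤ (H : ℝ) := by exact_mod_cast hH
    linarith
  have hδε : ((H : ℝ) - 1) * δ < ε := by
    have := (lt_div_iff₀ (by linarith : (0:ℝ) < (H : ℝ) - 1)).1 hδ
    linarith
  have hc3 : 3 < c := by nlinarith
  have hh1 : (1 : ℝ) ≤ (h : ℝ) := by exact_mod_cast h1
  have hhH' : (h : ℝ) ≤ (H : ℝ) := by exact_mod_cast hhH
  have hd0 : 0 ≤ ((h : ℝ) - 1) * δ := mul_nonneg (by linarith) hδ0.le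
  have hdε : ((h : ℝ) - 1) * δ < ε := by
    have : ((h : ℝ) - 1) * δ ≤ ((H : ℝ) - 1) * δ := by
      apply mul_le_mul_of_nonneg_right _ hδ0.le
      linarith
    linarith
  have hδε' : δ < ε := by nlinarith
  have himgX : (c + ·) '' (Set.Icc 0 (((h : ℝ) - 1) * δ)
        + (Set.Icc 0 (1 - ε) ∪ Set.Icc 2 (3 - ε)))
      = Set.Icc c (c + (((h : ℝ) - 1) * δ + (1 - ε)))
        ∪ Set.Icc (c + 2) (c + (((h : ℝ) - 1) * δ + (3 - ε))) := by
    rw [Set.add_union, Set.image_union,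
      Set.Icc_add_Icc hd0 (by linarith : (0:ℝ) ≤ 1 - ε),
      Set.Icc_add_Icc hd0 (by linarith : (2:ℝ) ≤ 3 - ε),
      Set.image_const_add_Icc, Set.image_const_add_Icc]
    norm_num
  set B : Set ℝ :=
    (Set.Icc 0 ((h : ℝ) * δ)
      ∪ (Set.Icc c (c + (((h : ℝ) - 1) * δ + (1 - ε)))
        ∪ Set.Icc (c + 2) (c + (((h : ℝ) - 1) * δ + (3 - ε)))))
      ∪ ⋃ r ∈ Finset.Icc 2 h,
          Set.Icc ((r : ℝ) * c) ((r : ℝ) * c + ((h - r : ℕ) : ℝ) * δ + (r : ℝ) * (3 - ε))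
    with hB
  have hUsub : (⋃ r ∈ Finset.Icc 2 h,
      Set.Icc ((r : ℝ) * c) ((r : ℝ) * c + ((h - r : ℕ) : ℝ) * δ + (r : ℝ) * (3 - ε)))
      ⊆ Set.Icc (2 * c) ((h : ℝ) * c + (h : ℝ) * δ + (h : ℝ) * (3 - ε)) := by
    intro x hx
    obtain ⟨r, hrmem, hx1, hx2⟩ := Set.mem_iUnion₂.1 hx
    obtain ⟨hr2, hrh⟩ := Finset.mem_Icc.1 hrmem
    have hr2' : (2 : ℝ) ≤ (r : ℝ) := by exact_mod_cast hr2
    have hrh' : (r : ℝ) ≤ (h : ℝ) := by exact_mod_cast hrh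
    have hhr : ((h - r : ℕ) : ℝ) ≤ (h : ℝ) := by
      have : h - r ≤ h := Nat.sub_le h r
      exact_mod_cast this
    have hc0 : (0 : ℝ) ≤ c := by linarith
    constructor
    · have := mul_le_mul_of_nonneg_right hr2' hc0
      linarith
    · have e1 : (r : ℝ) * c ≤ (h : ℝ) * c := mul_le_mul_of_nonneg_right hrh' hc0
      have e2 : ((h - r : ℕ) : ℝ) * δ ≤ (h : ℝ) * δ := mul_le_mul_of_nonneg_right hhr hδ0.le
      have e3 : (r : ℝ) * (3 - ε) ≤ (h : ℝ) * (3 - ε) :=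
        mul_le_mul_of_nonneg_right hrh' (by linarith)
      linarith
  have hBmeas : MeasurableSet B := by
    refine (measurableSet_Icc.union (measurableSet_Icc.union measurableSet_Icc)).union ?_
    exact (Finset.Icc 2 h).measurableSet_biUnion fun r _ => measurableSet_Icc
  have hIccfin : ∀ a b : ℝ, volume (Set.Icc a b) < ⊤ := by
    intro a b
    rw [Real.volume_Icc]
    exact ENNReal.ofReal_lt_top
  have hBfin : volume B ≠ ⊤ := by
    refine (measure_union_lt_top (measure_union_lt_top (hIccfin _ _)
      (measure_union_lt_top (hIccfin _ _) (hIccfin _ _))) ?_).ne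
    exact lt_of_le_of_lt (measure_mono hUsub) (hIccfin _ _)
  have key : ∀ m, 1 ≤ m → m ≤ n →
      sumset h (A m) = ((c + ·) '' (Set.Icc 0 (((h : ℝ) - 1) * δ) + Y m)) ∪ B := by
    intro m hm1 hmn
    obtain ⟨y₀, hy₀Y⟩ := hYne m hm1 hmn
    rw [hA m hm1 hmn, hX,
      sumset_A_eq ε δ c hε0 hε hδ0 (Y m) y₀ hy₀Y (hYsub m hm1 hmn) h h1, hB, himgX]
  have hTsub : ∀ m, 1 ≤ m → m ≤ n →
      Set.Icc 0 (((h : ℝ) - 1) * δ) + Y m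
        ⊆ Set.Icc (1 + ε) (2 - 2 * ε + ((h : ℝ) - 1) * δ) := by
    intro m hm1 hmn x hx
    obtain ⟨u, hu, y, hy, hxy⟩ := hx
    have hxy' : u + y = x := hxy
    subst hxy'
    obtain ⟨hy1, hy2⟩ := hYsub m hm1 hmn hy
    obtain ⟨hu1, hu2⟩ := hu
    exact ⟨by linarith, by linarith⟩
  have hTfin : ∀ m, 1 ≤ m → m ≤ n →
      volume (Set.Icc 0 (((h : ℝ) - 1) * δ) + Y m) ≠ ⊤ := by
    intro m hm1 hmn
    exact ((measure_mono (hTsub m hm1 hmn)).trans_lt (hIccfin _ _)).ne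
  have hdisj : ∀ m, 1 ≤ m → m ≤ n →
      Disjoint ((c + ·) '' (Set.Icc 0 (((h : ℝ) - 1) * δ) + Y m)) B := by
    intro m hm1 hmn
    rw [Set.disjoint_left]
    rintro x ⟨s, hs, hsx⟩ hxB
    have hsx' : c + s = x := hsx
    subst hsx'
    obtain ⟨hs1, hs2⟩ := hTsub m hm1 hmn hs
    rcases hxB with ((⟨hx1, hx2⟩ | (⟨hx1, hx2⟩ | ⟨hx1, hx2⟩)) | hxU)
    · have hhd : (h : ℝ) * δ = ((h : ℝ) - 1) * δ + δ := by ring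
      rw [hhd] at hx2
      linarith
    · linarith
    · linarith
    · obtain ⟨hx1, hx2⟩ := hUsub hxU
      linarith
  have vol : ∀ m, 1 ≤ m → m ≤ n →
      volume (sumset h (A m))
        = volume (Set.Icc 0 (((h : ℝ) - 1) * δ) + Y m) + volume B := by
    intro m hm1 hmn
    rw [key m hm1 hmn, measure_union (hdisj m hm1 hmn) hBmeas, volume_image_const_add]
  rw [vol j hj1 hjn, vol k hk1 hkn,
    ENNReal.toReal_add (hTfin j hj1 hjn) hBfin,
    ENNReal.toReal_add (hTfin k hk1 hkn) hBfin]
  ring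
end

section
/- Let H ≥ 2 be an integer, let ℓ_1, ℓ_2, …, ℓ_H be nonnegative integers, not all zero, and set L_H = ℓ_1 + ⋯ + ℓ_H. Let ε and δ be real numbers with 0 < ε < 1/3 and 0 < δ ≤ (1 − 3ε)/(2H·L_H). Then the closed interval [1+ε, 2−2ε] contains a set Z that is the union of L_H pairwise disjoint open intervals such that the nonempty set Y = [1+ε, 2−2ε] \ Z satisfies μ([0, (h−1)δ] + Y) = (h−1)δ + 1 − 3ε − δ·Σ_{r=h}^{H} (r−h+1)·ℓ_r for all h = 1,…,H. -/
open MeasureTheory Pointwise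

private lemma toReal_vol_Ioo (x y : ℝ) :
    (volume (Set.Ioo x y)).toReal = max (y - x) 0 := by
  rw [Real.volume_Ioo, ENNReal.toReal_ofReal']

private lemma vol_diff (p q : ℝ) (hpq : p ≤ q) (L : ℕ) (a b : ℕ → ℝ)
    (hsub : ∀ j ∈ Finset.Icc 1 L, Set.Ioo (a j) (b j) ⊆ Set.Icc p q)
    (hdisj : ∀ j ∈ Finset.Icc 1 L, ∀ k ∈ Finset.Icc 1 L, j ≠ k →
      Disjoint (Set.Ioo (a j) (b j)) (Set.Ioo (a k) (b k))) :
    (volume (Set.Icc p q \ ⋃ j ∈ Finset.Icc 1 L, Set.Ioo (a j) (b j))).toReal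
      = (q - p) - ∑ j ∈ Finset.Icc 1 L, max (b j - a j) 0 := by
  have hU : (⋃ j ∈ Finset.Icc 1 L, Set.Ioo (a j) (b j)) ⊆ Set.Icc p q := by
    simpa using hsub
  have hUmeas : MeasurableSet (⋃ j ∈ Finset.Icc 1 L, Set.Ioo (a j) (b j)) :=
    Finset.measurableSet_biUnion _ (fun j _ => measurableSet_Ioo)
  have hvolU : volume (⋃ j ∈ Finset.Icc 1 L, Set.Ioo (a j) (b j))
      = ∑ j ∈ Finset.Icc 1 L, volume (Set.Ioo (a j) (b j)) := by
    apply measure_biUnion_finset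
    · intro j hj k hk hjk
      exact hdisj j (by simpa using hj) k (by simpa using hk) hjk
    · exact fun j _ => measurableSet_Ioo
  have hfin : volume (⋃ j ∈ Finset.Icc 1 L, Set.Ioo (a j) (b j)) ≠ ⊤ :=
    ne_top_of_le_ne_top (by simp [Real.volume_Icc]) (measure_mono hU)
  rw [measure_diff hU hUmeas.nullMeasurableSet hfin,
    ENNReal.toReal_sub_of_le (measure_mono hU) (by simp [Real.volume_Icc]),
    hvolU, ENNReal.toReal_sum (fun j _ => by simp [Real.volume_Ioo]),
    Real.volume_Icc, ENNReal.toReal_ofReal (by linarith)]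
  congr 1
  exact Finset.sum_congr rfl (fun j _ => toReal_vol_Ioo _ _)

private lemma sumset_eq (p q t : ℝ) (hpq : p ≤ q) (ht : 0 ≤ t) (L : ℕ) (a b : ℕ → ℝ)
    (hap : ∀ j ∈ Finset.Icc 1 L, p ≤ a j)
    (hbq : ∀ j ∈ Finset.Icc 1 L, b j ≤ q)
    (hanot : ∀ j ∈ Finset.Icc 1 L, ∀ k ∈ Finset.Icc 1 L, a j ∉ Set.Ioo (a k) (b k)) :
    Set.Icc (0:ℝ) t + (Set.Icc p q \ ⋃ j ∈ Finset.Icc 1 L, Set.Ioo (a j) (b j))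
      = Set.Icc p (q + t) \ ⋃ j ∈ Finset.Icc 1 L, Set.Ioo (a j + t) (b j) := by
  ext x
  simp only [Set.mem_add, Set.mem_diff, Set.mem_Icc, Set.mem_iUnion, Set.mem_Ioo,
    not_exists, exists_prop, not_and]
  constructor
  · rintro ⟨u, ⟨hu0, hut⟩, y, ⟨⟨hyp, hyq⟩, hygaps⟩, rfl⟩
    refine ⟨⟨by linarith, by linarith⟩, ?_⟩
    intro j hj h1 h2
    exact hygaps j hj (by linarith) (by linarith)
  · rintro ⟨⟨hxp, hxq⟩, hx⟩
    by_cases hq : x ≤ q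
    · by_cases hg : ∃ j, j ∈ Finset.Icc 1 L ∧ a j < x ∧ x < b j
      · obtain ⟨j, hj, haj, hbj⟩ := hg
        have hxa : x ≤ a j + t := by
          by_contra hcon
          exact hx j hj (by linarith) hbj
        have haq : a j ≤ q := le_trans (le_of_lt haj) hq
        refine ⟨x - a j, ⟨by linarith, by linarith⟩, a j, ⟨⟨hap j hj, haq⟩, ?_⟩, by ring⟩
        intro k hk h1 h2
        exact hanot j hj k hk ⟨h1, h2⟩
      · push_neg at hg
        refine ⟨0, ⟨le_rfl, ht⟩, x, ⟨⟨hxp, hq⟩, ?_⟩, by ring⟩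
        intro k hk h1 h2
        exact absurd h2 (not_lt.2 (hg k hk h1))
    · push_neg at hq
      refine ⟨x - q, ⟨by linarith, by linarith⟩, q, ⟨⟨hpq, le_rfl⟩, ?_⟩, by ring⟩
      intro k hk h1 h2
      exact absurd (hbq k hk) (not_le.2 h2)

private lemma count_sum (ℓ : ℕ → ℕ) (f : ℕ → ℝ) (n : ℕ) :
    ∑ j ∈ Finset.Ioc 0 (∑ i ∈ Finset.Icc 1 n, ℓ i),
        f (sInf {r | j ≤ ∑ i ∈ Finset.Icc 1 r, ℓ i})
      = ∑ r ∈ Finset.Icc 1 n, (ℓ r : ℝ) * f r := by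
  induction n with
  | zero => simp
  | succ n ih =>
    have hS : ∀ m k : ℕ, m ≤ k → (∑ i ∈ Finset.Icc 1 m, ℓ i) ≤ ∑ i ∈ Finset.Icc 1 k, ℓ i := by
      intro m k hmk
      exact Finset.sum_le_sum_of_subset (Finset.Icc_subset_Icc_right hmk)
    have hsucc : (∑ i ∈ Finset.Icc 1 (n+1), ℓ i) = (∑ i ∈ Finset.Icc 1 n, ℓ i) + ℓ (n+1) :=
      Finset.sum_Icc_succ_top (Nat.one_le_iff_ne_zero.2 (Nat.succ_ne_zero n)) ℓ
    rw [← Finset.sum_Ioc_consecutive _ (Nat.zero_le _) (hS n (n+1) (Nat.le_succ n)), ih]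
    have hval : ∀ j ∈ Finset.Ioc (∑ i ∈ Finset.Icc 1 n, ℓ i) (∑ i ∈ Finset.Icc 1 (n+1), ℓ i),
        sInf {r | j ≤ ∑ i ∈ Finset.Icc 1 r, ℓ i} = n + 1 := by
      intro j hj
      rw [Finset.mem_Ioc] at hj
      have hne : (n+1) ∈ {r | j ≤ ∑ i ∈ Finset.Icc 1 r, ℓ i} := hj.2
      have hle : sInf {r | j ≤ ∑ i ∈ Finset.Icc 1 r, ℓ i} ≤ n + 1 := Nat.sInf_le hne
      have hmem := Nat.sInf_mem (Set.nonempty_of_mem hne)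
      rcases Nat.lt_or_ge (sInf {r | j ≤ ∑ i ∈ Finset.Icc 1 r, ℓ i}) (n+1) with hlt | hge
      · exfalso
        have : j ≤ ∑ i ∈ Finset.Icc 1 n, ℓ i :=
          le_trans hmem (hS _ n (Nat.lt_succ_iff.1 hlt))
        omega
      · omega
    have h2 : ∑ j ∈ Finset.Ioc (∑ i ∈ Finset.Icc 1 n, ℓ i) (∑ i ∈ Finset.Icc 1 (n+1), ℓ i),
        f (sInf {r | j ≤ ∑ i ∈ Finset.Icc 1 r, ℓ i}) = (ℓ (n+1) : ℝ) * f (n+1) := by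
      rw [Finset.sum_congr rfl (fun j hj => by rw [hval j hj]), Finset.sum_const,
        Nat.card_Ioc, hsucc]
      simp [nsmul_eq_mul]
    rw [h2, Finset.sum_Icc_succ_top (Nat.one_le_iff_ne_zero.2 (Nat.succ_ne_zero n))
      (fun r => (ℓ r : ℝ) * f r)]

set_option maxHeartbeats 2000000 in
/-- Let `H ≥ 2`, let `ℓ 1, …, ℓ H` be nonnegative integers, not all zero, with
`L = ℓ 1 + ⋯ + ℓ H`, and let `0 < ε < 1/3` and `0 < δ ≤ (1 − 3ε)/(2H·L)`.  Then the
closed interval `[1+ε, 2−2ε]` contains a set `Z` that is the union of `L` pairwise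
disjoint (nonempty) open intervals such that the nonempty set
`Y = [1+ε, 2−2ε] \ Z` satisfies
`μ([0, (h−1)δ] + Y) = (h−1)δ + 1 − 3ε − δ·Σ_{r=h}^{H} (r−h+1)·ℓ r`
for all `h = 1,…,H`. -/
theorem interval_minus_intervals (H : ℕ) (hH : 2 ≤ H)
    (ℓ : ℕ → ℕ) (L : ℕ) (hL : L = ∑ j ∈ Finset.Icc 1 H, ℓ j) (hLpos : 0 < L)
    (ε δ : ℝ) (hε0 : 0 < ε) (hε : ε < 1 / 3)
    (hδ0 : 0 < δ) (hδ : δ ≤ (1 - 3 * ε) / (2 * (H : ℝ) * (L : ℝ))) :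
    ∃ (Z : Set ℝ) (a b : ℕ → ℝ),
      Z ⊆ Set.Icc (1 + ε) (2 - 2 * ε) ∧
      Z = ⋃ j ∈ Finset.Icc 1 L, Set.Ioo (a j) (b j) ∧
      (∀ j, 1 ≤ j → j ≤ L → a j < b j) ∧
      (∀ j, 1 ≤ j → j ≤ L → ∀ k, 1 ≤ k → k ≤ L → j ≠ k →
        Disjoint (Set.Ioo (a j) (b j)) (Set.Ioo (a k) (b k))) ∧
      (Set.Icc (1 + ε) (2 - 2 * ε) \ Z).Nonempty ∧
      (∀ h, 1 ≤ h → h ≤ H →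
        (volume (Set.Icc (0 : ℝ) (((h : ℝ) - 1) * δ)
            + (Set.Icc (1 + ε) (2 - 2 * ε) \ Z))).toReal
          = ((h : ℝ) - 1) * δ + 1 - 3 * ε
            - δ * ∑ r ∈ Finset.Icc h H, ((r : ℝ) - (h : ℝ) + 1) * (ℓ r : ℝ)) := by
  have hHpos : 0 < H := by omega
  have hH1 : (1:ℝ) ≤ H := by exact_mod_cast hHpos
  have hL1 : (1:ℝ) ≤ L := by exact_mod_cast hLpos
  have h3ε : 0 < 1 - 3 * ε := by linarith
  set p : ℝ := 1 + ε with hp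
  set q : ℝ := 2 - 2 * ε with hq
  have hpq : p ≤ q := by rw [hp, hq]; linarith
  set rk : ℕ → ℕ := fun j => sInf {r | j ≤ ∑ i ∈ Finset.Icc 1 r, ℓ i} with hrk
  set K : ℝ := ∑ r ∈ Finset.Icc 1 H, (r : ℝ) * (ℓ r : ℝ) with hKdef
  set w : ℝ := (1 - 3 * ε - δ * K) / ((L : ℝ) + 1) with hwdef
  set A : ℕ → ℝ := fun j => p + j * w + δ * ∑ i ∈ Finset.Ico 1 j, (rk i : ℝ) with hA
  set B : ℕ → ℝ := fun j => p + j * w + δ * ∑ i ∈ Finset.Icc 1 j, (rk i : ℝ) with hB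
  -- counting
  have hIoc : Finset.Icc 1 L = Finset.Ioc 0 L := by
    ext i; simp [Finset.mem_Icc, Finset.mem_Ioc]; omega
  have hcount : ∀ f : ℕ → ℝ, ∑ j ∈ Finset.Icc 1 L, f (rk j)
      = ∑ r ∈ Finset.Icc 1 H, (ℓ r : ℝ) * f r := by
    intro f
    simp only [hrk]
    rw [hIoc, hL]
    exact count_sum ℓ f H
  -- size estimates
  have hKnn : 0 ≤ K := by
    rw [hKdef]; positivity
  have hKle : K ≤ (H : ℝ) * L := by
    rw [hKdef]
    calc ∑ r ∈ Finset.Icc 1 H, (r : ℝ) * (ℓ r : ℝ)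
        ≤ ∑ r ∈ Finset.Icc 1 H, (H : ℝ) * (ℓ r : ℝ) := by
          refine Finset.sum_le_sum (fun r hr => ?_)
          have h1 : (r : ℝ) ≤ H := by exact_mod_cast (Finset.mem_Icc.1 hr).2
          have h2 : (0:ℝ) ≤ (ℓ r : ℝ) := Nat.cast_nonneg _
          nlinarith
      _ = (H : ℝ) * L := by
          rw [← Finset.mul_sum]
          congr 1
          rw [hL]
          push_cast
          ring
  have hδ' : δ * (2 * (H : ℝ) * (L : ℝ)) ≤ 1 - 3 * ε := by
    rw [← le_div_iff₀ (by positivity)]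
    exact hδ
  have hδK : δ * K ≤ (1 - 3 * ε) / 2 := by
    nlinarith
  have hw : 0 < w := by
    rw [hwdef]
    apply div_pos (by nlinarith) (by positivity)
  -- rank facts
  have hrk_mem : ∀ j, 1 ≤ j → j ≤ L → j ≤ ∑ i ∈ Finset.Icc 1 (rk j), ℓ i := by
    intro j h1 h2
    have hne : H ∈ {r | j ≤ ∑ i ∈ Finset.Icc 1 r, ℓ i} := by
      simp only [Set.mem_setOf_eq]; omega
    exact Nat.sInf_mem (Set.nonempty_of_mem hne)
  have hrk1 : ∀ j, 1 ≤ j → j ≤ L → 1 ≤ rk j := by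
    intro j h1 h2
    by_contra hcon
    have h0 : rk j = 0 := by omega
    have := hrk_mem j h1 h2
    rw [h0] at this
    simp at this
    omega
  -- interval facts
  have hBA : ∀ j, 1 ≤ j → B j - A j = δ * rk j := by
    intro j hj
    have hIccIco : Finset.Icc 1 j = Finset.Ico 1 (j + 1) := (Finset.Ico_add_one_right_eq_Icc 1 j).symm
    rw [hA, hB]
    simp only
    rw [hIccIco, Finset.sum_Ico_succ_top hj]
    ring
  have hAB : ∀ j, 1 ≤ j → j ≤ L → A j < B j := by
    intro j h1 h2
    have h3 := hBA j h1
    have h4 : (1:ℝ) ≤ (rk j : ℝ) := by exact_mod_cast hrk1 j h1 h2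
    nlinarith
  have hchain : ∀ j k, 1 ≤ j → j < k → B j + w ≤ A k := by
    intro j k h1 h2
    have hsum : ∑ i ∈ Finset.Icc 1 j, (rk i : ℝ) ≤ ∑ i ∈ Finset.Ico 1 k, (rk i : ℝ) := by
      refine Finset.sum_le_sum_of_subset_of_nonneg ?_ (fun i _ _ => Nat.cast_nonneg _)
      intro i hi
      simp only [Finset.mem_Icc, Finset.mem_Ico] at *
      omega
    have hjk : (j : ℝ) + 1 ≤ k := by exact_mod_cast h2
    rw [hA, hB]
    simp only
    have hδs : δ * ∑ i ∈ Finset.Icc 1 j, (rk i : ℝ) ≤ δ * ∑ i ∈ Finset.Ico 1 k, (rk i : ℝ) :=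
      mul_le_mul_of_nonneg_left hsum hδ0.le
    nlinarith
  have hAmono : ∀ j k, j ≤ k → A j ≤ A k := by
    intro j k hjk
    have hsum : ∑ i ∈ Finset.Ico 1 j, (rk i : ℝ) ≤ ∑ i ∈ Finset.Ico 1 k, (rk i : ℝ) := by
      refine Finset.sum_le_sum_of_subset_of_nonneg ?_ (fun i _ _ => Nat.cast_nonneg _)
      exact Finset.Ico_subset_Ico le_rfl hjk
    have hjk' : (j : ℝ) ≤ k := by exact_mod_cast hjk
    have hδs : δ * ∑ i ∈ Finset.Ico 1 j, (rk i : ℝ) ≤ δ * ∑ i ∈ Finset.Ico 1 k, (rk i : ℝ) :=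
      mul_le_mul_of_nonneg_left hsum hδ0.le
    rw [hA]
    simp only
    nlinarith
  have hBmono : ∀ j k, j ≤ k → B j ≤ B k := by
    intro j k hjk
    have hsum : ∑ i ∈ Finset.Icc 1 j, (rk i : ℝ) ≤ ∑ i ∈ Finset.Icc 1 k, (rk i : ℝ) := by
      refine Finset.sum_le_sum_of_subset_of_nonneg ?_ (fun i _ _ => Nat.cast_nonneg _)
      exact Finset.Icc_subset_Icc le_rfl hjk
    have hjk' : (j : ℝ) ≤ k := by exact_mod_cast hjk
    have hδs : δ * ∑ i ∈ Finset.Icc 1 j, (rk i : ℝ) ≤ δ * ∑ i ∈ Finset.Icc 1 k, (rk i : ℝ) :=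
      mul_le_mul_of_nonneg_left hsum hδ0.le
    rw [hB]
    simp only
    nlinarith
  have hA1 : A 1 = p + w := by
    rw [hA]; simp
  have hBL : B L = q - w := by
    have hsumK : ∑ i ∈ Finset.Icc 1 L, (rk i : ℝ) = K := by
      have := hcount (fun r => (r : ℝ))
      rw [hKdef]
      rw [this]
      exact Finset.sum_congr rfl (fun r _ => by ring)
    have h1 : ((L : ℝ) + 1) * w = 1 - 3 * ε - δ * K := by
      rw [hwdef]; field_simp
    have h1' : (L : ℝ) * w + w = 1 - 3 * ε - δ * K := by linear_combination h1
    have hqp : q - p = 1 - 3 * ε := by rw [hp, hq]; ring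
    rw [hB]
    simp only [hsumK]
    linarith
  have hpa : ∀ j, 1 ≤ j → p + w ≤ A j := by
    intro j hj
    calc p + w = A 1 := hA1.symm
      _ ≤ A j := hAmono 1 j hj
  have hbq : ∀ j, j ≤ L → B j ≤ q - w := by
    intro j hj
    calc B j ≤ B L := hBmono j L hj
      _ = q - w := hBL
  -- main refine
  refine ⟨⋃ j ∈ Finset.Icc 1 L, Set.Ioo (A j) (B j), A, B, ?_, rfl, ?_, ?_, ?_, ?_⟩
  · -- Z ⊆ Icc p q
    refine Set.iUnion₂_subset (fun j hj => ?_)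
    rw [Finset.mem_Icc] at hj
    intro x hx
    rw [Set.mem_Ioo] at hx
    have h1 := hpa j hj.1
    have h2 := hbq j hj.2
    exact ⟨by linarith [hx.1], by linarith [hx.2]⟩
  · exact fun j h1 h2 => hAB j h1 h2
  · -- disjointness
    intro j h1 h2 k h3 h4 hjk
    rcases Nat.lt_or_ge j k with hlt | hge
    · rw [Set.disjoint_left]
      rintro x ⟨_, hx2⟩ ⟨hx3, _⟩
      have := hchain j k h1 hlt
      linarith
    · have hlt : k < j := by omega
      rw [Set.disjoint_left]
      rintro x ⟨hx1, _⟩ ⟨_, hx4⟩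
      have := hchain k j h3 hlt
      linarith
  · -- nonempty
    refine ⟨p, ⟨le_rfl, hpq⟩, ?_⟩
    intro hmem
    rw [Set.mem_iUnion₂] at hmem
    obtain ⟨j, hj, hpj, _⟩ := hmem
    rw [Finset.mem_Icc] at hj
    have := hpa j hj.1
    linarith
  · -- measure computation
    intro h hh1 hhH
    set t : ℝ := ((h : ℝ) - 1) * δ with htdef
    have hhc : (1:ℝ) ≤ (h:ℝ) := by exact_mod_cast hh1
    have ht : 0 ≤ t := by rw [htdef]; nlinarith
    have hap' : ∀ j ∈ Finset.Icc 1 L, p ≤ A j := by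
      intro j hj
      rw [Finset.mem_Icc] at hj
      linarith [hpa j hj.1]
    have hbq' : ∀ j ∈ Finset.Icc 1 L, B j ≤ q := by
      intro j hj
      rw [Finset.mem_Icc] at hj
      linarith [hbq j hj.2]
    have hanot : ∀ j ∈ Finset.Icc 1 L, ∀ k ∈ Finset.Icc 1 L, A j ∉ Set.Ioo (A k) (B k) := by
      intro j hj k hk
      rw [Finset.mem_Icc] at hj hk
      rcases lt_trichotomy j k with hlt | heq | hgt
      · intro hmem
        rw [Set.mem_Ioo] at hmem
        have := hAmono j k hlt.le
        linarith [hmem.1]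
      · subst heq
        intro hmem
        rw [Set.mem_Ioo] at hmem
        linarith [hmem.1]
      · intro hmem
        rw [Set.mem_Ioo] at hmem
        have := hchain k j hk.1 hgt
        linarith [hmem.2]
    rw [sumset_eq p q t hpq ht L A B hap' hbq' hanot]
    have hsub2 : ∀ j ∈ Finset.Icc 1 L, Set.Ioo (A j + t) (B j) ⊆ Set.Icc p (q + t) := by
      intro j hj x hx
      rw [Finset.mem_Icc] at hj
      rw [Set.mem_Ioo] at hx
      have h1 := hpa j hj.1
      have h2 := hbq j hj.2
      exact ⟨by linarith [hx.1], by linarith [hx.2]⟩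
    have hdisj2 : ∀ j ∈ Finset.Icc 1 L, ∀ k ∈ Finset.Icc 1 L, j ≠ k →
        Disjoint (Set.Ioo (A j + t) (B j)) (Set.Ioo (A k + t) (B k)) := by
      intro j hj k hk hjk
      rw [Finset.mem_Icc] at hj hk
      rcases Nat.lt_or_ge j k with hlt | hge
      · rw [Set.disjoint_left]
        rintro x ⟨_, hx2⟩ ⟨hx3, _⟩
        have := hchain j k hj.1 hlt
        linarith
      · have hlt : k < j := by omega
        rw [Set.disjoint_left]
        rintro x ⟨hx1, _⟩ ⟨_, hx4⟩
        have := hchain k j hk.1 hlt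
        linarith
    rw [vol_diff p (q + t) (by linarith) L (fun j => A j + t) B hsub2 hdisj2]
    have hmax : ∑ j ∈ Finset.Icc 1 L, max (B j - (A j + t)) 0
        = ∑ r ∈ Finset.Icc 1 H, (ℓ r : ℝ) * max (δ * r - t) 0 := by
      rw [← hcount (fun r => max (δ * r - t) 0)]
      refine Finset.sum_congr rfl (fun j hj => ?_)
      rw [Finset.mem_Icc] at hj
      rw [show B j - (A j + t) = (B j - A j) - t by ring, hBA j hj.1]
    rw [hmax]
    have hfilter : Finset.filter (fun r => h ≤ r) (Finset.Icc 1 H) = Finset.Icc h H := by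
      ext r
      simp only [Finset.mem_filter, Finset.mem_Icc]
      omega
    have hsum2 : ∑ r ∈ Finset.Icc 1 H, (ℓ r : ℝ) * max (δ * r - t) 0
        = δ * ∑ r ∈ Finset.Icc h H, ((r : ℝ) - (h : ℝ) + 1) * (ℓ r : ℝ) := by
      have hcongr : ∀ r ∈ Finset.Icc 1 H, (ℓ r : ℝ) * max (δ * r - t) 0
          = if h ≤ r then δ * (((r : ℝ) - (h : ℝ) + 1) * (ℓ r : ℝ)) else 0 := by
        intro r hr
        rw [Finset.mem_Icc] at hr
        by_cases hhr : h ≤ r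
        · have hrc : (h : ℝ) ≤ (r : ℝ) := by exact_mod_cast hhr
          rw [if_pos hhr, max_eq_left (by rw [htdef]; nlinarith)]
          rw [htdef]; ring
        · have hrc : (r : ℝ) + 1 ≤ (h : ℝ) := by exact_mod_cast Nat.lt_of_not_le hhr
          rw [if_neg hhr, max_eq_right (by rw [htdef]; nlinarith)]
          ring
      rw [Finset.sum_congr rfl hcongr, Finset.sum_ite, Finset.sum_const_zero, add_zero,
        hfilter, Finset.mul_sum]
    rw [hsum2, hp, hq]
    ring
end
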